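/- Let R be a commutative ring, M an R-module, A ∈ M, and let b_d, …, b_0 be bits with k = Σ_{0 ≤ i ≤ d} b_i·2^i, and let c_d, …, c_0 ∈ R be arbitrary scalars (one per iteration). Define x, y ∈ M by x = 0, y = −A, and for i = d down to 0: if b_i = 1 then simultaneously x ← c_i·(x + y + A) − (2y + A) and y ← 2y; otherwise y ← c_i·(y + x + A) − (2x + A) and x ← 2x. Then after processing all bits, x = k·A (and y = −(x + A) throughout). -/
import Mathlib


/-- State of the semi-interleaved ladder for scalar multiplication with
per-iteration coefficients after `j` iterations: starting from
`(x, y) = (0, −A)`, iteration `j` (which processes bit `i = d - j`, i.e. bits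
are processed from `i = d` down to `0`) simultaneously updates, when the bit is
`1`, `x ← cᵢ•(x + y + A) − (2y + A)` and `y ← 2y`, and otherwise
`y ← cᵢ•(y + x + A) − (2x + A)` and `x ← 2x`. -/
def semiLadderSM {R M : Type*} [CommRing R] [AddCommGroup M] [Module R M]
    (A : M) (b : ℕ → Bool) (c : ℕ → R) (d : ℕ) : ℕ → M × M
  | 0 => (0, -A)
  | j + 1 =>
    let s := semiLadderSM A b c d j
    let i := d - j
    if b i then
      (c i • (s.1 + s.2 + A) - (s.2 + s.2 + A), s.2 + s.2)
    else
      (s.1 + s.1, c i • (s.2 + s.1 + A) - (s.1 + s.1 + A))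

theorem semiLadderSM_key {R M : Type*} [CommRing R] [AddCommGroup M]
    [Module R M] (A : M) (d : ℕ) (b : ℕ → Bool) (c : ℕ → R) :
    ∀ j ≤ d + 1,
      (semiLadderSM A b c d j).2 = -((semiLadderSM A b c d j).1 + A) ∧
      (semiLadderSM A b c d j).1
        = (∑ i ∈ Finset.range j, if b (d + 1 - j + i) then 2 ^ i else 0) • A := by
  intro j
  induction j with
  | zero => intro _; simp [semiLadderSM]
  | succ j ih =>
    intro hj
    obtain ⟨hy, hx⟩ := ih (by omega)
    have hsum : (∑ i ∈ Finset.range (j + 1),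
          if b (d + 1 - (j + 1) + i) then (2 : ℕ) ^ i else 0)
        = 2 * (∑ i ∈ Finset.range j, if b (d + 1 - j + i) then 2 ^ i else 0)
          + (if b (d - j) then 1 else 0) := by
      rw [Finset.sum_range_succ', Finset.mul_sum]
      congr 1
      · apply Finset.sum_congr rfl
        intro i _
        have h2 : d + 1 - (j + 1) + (i + 1) = d + 1 - j + i := by omega
        rw [h2]
        split <;> ring
      · have h1 : d + 1 - (j + 1) + 0 = d - j := by omega
        rw [h1]; simp
    set n : ℕ := ∑ i ∈ Finset.range j, if b (d + 1 - j + i) then 2 ^ i else 0 with hn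
    show ((semiLadderSM A b c d (j + 1)).2 = _) ∧ _
    rw [semiLadderSM]
    by_cases hb : b (d - j) = true
    · simp only [hsum, hb, if_true]
      constructor
      · rw [hy, hx]
        have hz : n • A + -(n • A + A) + A = (0 : M) := by abel
        rw [hz, smul_zero]
        abel
      · rw [hy, hx]
        have hz : n • A + -(n • A + A) + A = (0 : M) := by abel
        rw [hz, smul_zero, add_smul, mul_smul, one_smul, two_smul]
        abel
    · rw [if_neg hb]
      simp only [hb, Bool.false_eq_true, if_false, add_zero] at hsum
      simp only [hsum]
      constructor
      · rw [hy, hx]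
        have hz : -(n • A + A) + n • A + A = (0 : M) := by abel
        rw [hz, smul_zero]
        abel
      · rw [hx, mul_smul, two_smul]

/-- after processing the bits `b d, …, b 0` of `k`, the
semi-interleaved ladder for scalar multiplication with arbitrary per-iteration
coefficients `c i` computes `x = k • A`, with `y = −(x + A)` throughout. -/
theorem semiLadderSM_correct {R M : Type*} [CommRing R] [AddCommGroup M]
    [Module R M] (A : M) (d : ℕ) (b : ℕ → Bool) (c : ℕ → R) (k : ℕ)
    (hk : k = ∑ i ∈ Finset.range (d + 1), (if b i then 2 ^ i else 0)) :
    (semiLadderSM A b c d (d + 1)).1 = k • A ∧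
      ∀ j ≤ d + 1,
        (semiLadderSM A b c d j).2 = -((semiLadderSM A b c d j).1 + A) := by
  constructor
  · have h := (semiLadderSM_key A d b c (d + 1) le_rfl).2
    rw [h, hk]
    congr 1
    apply Finset.sum_congr rfl
    intro i _
    have : d + 1 - (d + 1) + i = i := by omega
    rw [this]
  · intro j hj
    exact (semiLadderSM_key A d b c j hj).1
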